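/- arXiv:2109.06008 — 3 statements merged into one kernel-verified Lean document; each statement's English description precedes it below -/
import Mathlib

section
/- Fix reals λ, r, b, ν > 0, d ≥ 0 with b > d, δ > 0, and β̂ ≥ 0, and let q(θ,ψ) := min{β̂θψ, 1} (vigilant follow-the-crowd response). Set ρ := λ/(r+b) and μ := b/ν, and assume ρ > 1 and β̂ < μρ²/(ρ−1). Let θ̂ := 1 − 1/ρ, ψ̂ := 0, and η̂ := (b−d)/ϱ(θ̂,ψ̂). If η̂ > δ, then the point P := (θ̂, ψ̂, η̂) is a Lyapunov-stable equilibrium of g. -/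
/-- `ϱ(θ,ψ) = b + d + λθφ + νφ + rθ` with `φ = 1 − θ − ψ` (case `d_e = 0`). -/
noncomputable def varrho (lam r b ν d θ ψ : ℝ) : ℝ :=
  b + d + lam * θ * (1 - θ - ψ) + ν * (1 - θ - ψ) + r * θ

/-- The vector field `g = (g^θ, g^ψ, g^η)` of the limit ODE for the epidemic model with
vaccination-response function `q`, on coordinates `(θ, ψ, η)`. -/
noncomputable def epiVF (lam r b ν d : ℝ) (q : ℝ → ℝ → ℝ) (x : ℝ × ℝ × ℝ) : ℝ × ℝ × ℝ :=
  (x.1 / (x.2.2 * varrho lam r b ν d x.1 x.2.1) * ((1 - x.1 - x.2.1) * lam - r - b),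
   1 / (x.2.2 * varrho lam r b ν d x.1 x.2.1) *
     (q x.1 x.2.1 * (1 - x.1 - x.2.1) * ν - b * x.2.1),
   (b - d) / varrho lam r b ν d x.1 x.2.1 - x.2.2)

/-- The domain `D = {(θ,ψ,η) : θ ≥ 0, ψ ≥ 0, θ+ψ ≤ 1, η > δ}`. -/
def domD (δ : ℝ) : Set (ℝ × ℝ × ℝ) :=
  {x | 0 ≤ x.1 ∧ 0 ≤ x.2.1 ∧ x.1 + x.2.1 ≤ 1 ∧ δ < x.2.2}

/-- `P ∈ D` is a Lyapunov-stable equilibrium of `g`: `g(P) = 0` and there are `r₀ > 0` and a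
continuously differentiable `V` with `V(P) = 0`, `V(x) > 0` and `⟨∇V(x), g(x)⟩ < 0` for all
`x ∈ D ∩ B(P,r₀)`, `x ≠ P`. -/
def IsLyapunovStableEquilibrium (g : ℝ × ℝ × ℝ → ℝ × ℝ × ℝ) (D : Set (ℝ × ℝ × ℝ))
    (P : ℝ × ℝ × ℝ) : Prop :=
  P ∈ D ∧ g P = 0 ∧
    ∃ r₀ > (0 : ℝ), ∃ V : ℝ × ℝ × ℝ → ℝ, ContDiff ℝ 1 V ∧ V P = 0 ∧
      ∀ x ∈ D ∩ Metric.ball P r₀, x ≠ P → 0 < V x ∧ fderiv ℝ V x (g x) < 0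

lemma fderiv_quad_apply (A B a c : ℝ) (x v : ℝ × ℝ × ℝ) :
    fderiv ℝ (fun x : ℝ × ℝ × ℝ =>
        A * ((x.1 - a)*(x.1 - a)) + B * x.2.1 + (x.2.2 - c)*(x.2.2 - c)) x v
      = 2*A*(x.1 - a)*v.1 + B*v.2.1 + 2*(x.2.2 - c)*v.2.2 := by
  have hf : HasFDerivAt (fun x : ℝ × ℝ × ℝ => x.1 - a) (ContinuousLinearMap.fst ℝ ℝ (ℝ×ℝ)) x :=
    (hasFDerivAt_fst (𝕜 := ℝ) (p := x)).sub_const a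
  have hs : HasFDerivAt (fun x : ℝ × ℝ × ℝ => x.2.1)
      ((ContinuousLinearMap.fst ℝ ℝ ℝ).comp (ContinuousLinearMap.snd ℝ ℝ (ℝ×ℝ))) x :=
    (hasFDerivAt_fst (𝕜 := ℝ) (p := x.2)).comp x (hasFDerivAt_snd (𝕜 := ℝ) (p := x))
  have hw : HasFDerivAt (fun x : ℝ × ℝ × ℝ => x.2.2 - c)
      ((ContinuousLinearMap.snd ℝ ℝ ℝ).comp (ContinuousLinearMap.snd ℝ ℝ (ℝ×ℝ))) x :=
    ((hasFDerivAt_snd (𝕜 := ℝ) (p := x.2)).comp x (hasFDerivAt_snd (𝕜 := ℝ) (p := x))).sub_const c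
  have H := (((hf.mul hf).const_mul A).add (hs.const_mul B)).add (hw.mul hw)
  rw [show fderiv ℝ (fun x : ℝ × ℝ × ℝ =>
      A * ((x.1 - a)*(x.1 - a)) + B * x.2.1 + (x.2.2 - c)*(x.2.2 - c)) x = _ from H.fderiv]
  simp [ContinuousLinearMap.comp_apply, ContinuousLinearMap.add_apply,
    ContinuousLinearMap.smul_apply]
  ring

set_option maxHeartbeats 1000000 in
/-- Vigilant follow-the-crowd response `q = min{β̂θψ, 1}`, endemic
disease `ρ > 1` with `β̂ < μρ²/(ρ−1)`: the NVDF point `(1 − 1/ρ, 0, η̂)` is a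
Lyapunov-stable equilibrium of `g`. -/
theorem stmt_11 (lam r b ν d δ βh ρ μ θh ψh ηh : ℝ)
    (hlam : 0 < lam) (hr : 0 < r) (hb : 0 < b) (hν : 0 < ν)
    (hd : 0 ≤ d) (hbd : d < b) (hδ : 0 < δ) (hβ : 0 ≤ βh)
    (hρdef : ρ = lam / (r + b)) (hμdef : μ = b / ν)
    (hρ : 1 < ρ) (hβlt : βh < μ * ρ ^ 2 / (ρ - 1))
    (hθ : θh = 1 - 1 / ρ) (hψ : ψh = 0)
    (hηdef : ηh = (b - d) / varrho lam r b ν d θh ψh) (hη : δ < ηh) :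
    IsLyapunovStableEquilibrium
      (epiVF lam r b ν d (fun θ ψ => min (βh * θ * ψ) 1)) (domD δ) (θh, ψh, ηh) := by
  subst hψ
  have hK : (0:ℝ) < r + b := by linarith
  have hρ0 : (0:ℝ) < ρ := by linarith
  have hρ1 : (0:ℝ) < ρ - 1 := by linarith
  have hinvρ : (0:ℝ) < 1/ρ := by positivity
  have hinvρ1 : 1/ρ < 1 := by rw [div_lt_one hρ0]; linarith
  have hθh0 : 0 < θh := by rw [hθ]; linarith only [hinvρ1]
  have hθh1 : θh < 1 := by rw [hθ]; linarith only [hinvρ]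
  have hlamθh : lam * (1 - θh) = r + b := by
    have h : θh = 1 - (r+b)/lam := by rw [hθ, hρdef, one_div_div]
    rw [h]
    field_simp
    ring
  -- epsilon
  obtain ⟨ε₀, hε₀def⟩ : ∃ x : ℝ, x = b - βh * θh * (1 - θh) * ν := ⟨_, rfl⟩
  have hqid : θh * (1 - θh) * ρ^2 = ρ - 1 := by
    have hiρ : (1/ρ)*ρ = 1 := one_div_mul_cancel hρ0.ne'
    rw [hθ]
    linear_combination (ρ - (1/ρ)*ρ - 1) * hiρ
  have hε₀ : 0 < ε₀ := by
    rw [hμdef] at hβlt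
    have h1 : βh * (ρ - 1) < b / ν * ρ ^ 2 := (lt_div_iff₀ hρ1).mp hβlt
    have h2 : βh * (ρ - 1) * ν < b * ρ ^ 2 := by
      have h2' := mul_lt_mul_of_pos_right h1 hν
      have h2'' : b / ν * ρ^2 * ν = b * ρ^2 := by field_simp
      rw [h2''] at h2'; exact h2'
    have h3 : βh*θh*(1-θh)*ν*ρ^2 = βh*ν*(ρ-1) := by linear_combination (βh*ν)*hqid
    rw [hε₀def]
    nlinarith only [h2, h3, mul_pos hρ0 hρ0]
  -- constants
  obtain ⟨M, hMdef⟩ : ∃ x : ℝ, x = b + d + lam + ν + r := ⟨_, rfl⟩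
  have hM : 0 < M := by rw [hMdef]; linarith only [hb, hd, hlam, hν, hr]
  obtain ⟨L, hLdef⟩ : ∃ x : ℝ, x = 2*(lam + ν + r) := ⟨_, rfl⟩
  have hL : 0 < L := by rw [hLdef]; linarith only [hlam, hν, hr]
  obtain ⟨c, hcdef⟩ : ∃ x : ℝ, x = 1/(δ*b) := ⟨_, rfl⟩
  have hc : 0 < c := by rw [hcdef]; exact one_div_pos.mpr (mul_pos hδ hb)
  obtain ⟨K₁, hK₁def⟩ : ∃ x : ℝ, x = (b - d)*L/b^2 := ⟨_, rfl⟩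
  have hK₁ : 0 < K₁ := by
    rw [hK₁def]
    exact div_pos (mul_pos (by linarith only [hbd]) hL) (by positivity)
  have hK₁b : K₁ * b^2 = (b-d)*L := by
    rw [hK₁def]; exact div_mul_cancel₀ _ (by positivity)
  obtain ⟨A, hAdef⟩ : ∃ x : ℝ, x = (2*K₁^2+1)*(2*M)/(lam*θh) := ⟨_, rfl⟩
  have hA : 0 < A := by
    rw [hAdef]
    exact div_pos (mul_pos (by nlinarith only [sq_nonneg K₁]) (by linarith only [hM]))
      (mul_pos hlam hθh0)
  have hAeq : A * (lam*θh) = (2*K₁^2+1)*(2*M) := by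
    rw [hAdef]; exact div_mul_cancel₀ _ (ne_of_gt (mul_pos hlam hθh0))
  obtain ⟨X₂, hX₂def⟩ : ∃ x : ℝ, x = 2*A*lam*c + 2*K₁ + 1 := ⟨_, rfl⟩
  have hX₂0 : 0 < X₂ := by
    rw [hX₂def]
    linarith only [mul_pos (mul_pos hA hlam) hc, hK₁]
  obtain ⟨B, hBdef⟩ : ∃ x : ℝ, x = 4*M*X₂/ε₀ := ⟨_, rfl⟩
  have hB : 0 < B := by
    rw [hBdef]
    exact div_pos (mul_pos (by linarith only [hM]) hX₂0) hε₀
  have hBeq : B * ε₀ = 4*M*X₂ := by rw [hBdef]; exact div_mul_cancel₀ _ hε₀.ne'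
  obtain ⟨r₀, hr₀def⟩ : ∃ x : ℝ, x = min 1 (min (θh/2) (ε₀/(6*βh*ν+1))) := ⟨_, rfl⟩
  have hden : (0:ℝ) < 6*βh*ν+1 := by linarith only [mul_nonneg hβ hν.le]
  have hr₀pos : 0 < r₀ := by
    rw [hr₀def]
    exact lt_min one_pos (lt_min (by linarith only [hθh0]) (div_pos hε₀ hden))
  have hr₀1 : r₀ ≤ 1 := hr₀def ▸ min_le_left _ _
  have hr₀θ : r₀ ≤ θh/2 := hr₀def ▸ le_trans (min_le_right _ _) (min_le_left _ _)
  have hr₀ε : r₀ ≤ ε₀/(6*βh*ν+1) := hr₀def ▸ le_trans (min_le_right _ _) (min_le_right _ _)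
  have h3βν : 3*βh*ν*r₀ ≤ ε₀/2 := by
    rw [le_div_iff₀ hden] at hr₀ε
    linarith only [hr₀ε, hr₀pos]
  -- varrho at P
  obtain ⟨R0, hR0def⟩ : ∃ x : ℝ, x = varrho lam r b ν d θh 0 := ⟨_, rfl⟩
  have hR0lb : b ≤ R0 := by
    rw [hR0def, varrho]
    linarith only [hd,
      mul_nonneg (mul_nonneg hlam.le hθh0.le) (by linarith only [hθh1] : (0:ℝ) ≤ 1 - θh - 0),
      mul_nonneg hν.le (by linarith only [hθh1] : (0:ℝ) ≤ 1 - θh - 0),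
      mul_nonneg hr.le hθh0.le]
  have hR0pos : 0 < R0 := lt_of_lt_of_le hb hR0lb
  have hηh1 : ηh ≤ 1 := by
    rw [hηdef, ← hR0def, div_le_one hR0pos]
    linarith only [hR0lb, hd]
  constructor
  · -- P ∈ D
    simp only [domD, Set.mem_setOf_eq]
    exact ⟨hθh0.le, le_refl 0, by simpa using hθh1.le, hη⟩
  constructor
  · -- g P = 0
    have h1 : (1 - θh - 0)*lam - r - b = 0 := by linear_combination hlamθh
    have h0 : (0 : ℝ × ℝ × ℝ) = ((0:ℝ), (0:ℝ), (0:ℝ)) := rfl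
    rw [h0]
    simp only [epiVF, Prod.mk.injEq]
    refine ⟨?_, ?_, ?_⟩
    · rw [h1, mul_zero]
    · norm_num
    · rw [hηdef]; ring
  -- Lyapunov function
  refine ⟨r₀, hr₀pos, fun x : ℝ × ℝ × ℝ =>
      A * ((x.1 - θh)*(x.1 - θh)) + B * x.2.1 + (x.2.2 - ηh)*(x.2.2 - ηh), ?_, by norm_num, ?_⟩
  · -- ContDiff
    have cψ : ContDiff ℝ 1 (fun x : ℝ×ℝ×ℝ => x.2.1) := contDiff_fst.comp contDiff_snd
    have cη : ContDiff ℝ 1 (fun x : ℝ×ℝ×ℝ => x.2.2) := contDiff_snd.comp contDiff_snd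
    exact ((contDiff_const.mul ((contDiff_fst.sub contDiff_const).mul
        (contDiff_fst.sub contDiff_const))).add (contDiff_const.mul cψ)).add
      ((cη.sub contDiff_const).mul (cη.sub contDiff_const))
  rintro ⟨θ, ψ, η⟩ ⟨hDmem, hball⟩ hne
  obtain ⟨hθ0, hψ0, hsum, hηδ⟩ : 0 ≤ θ ∧ 0 ≤ ψ ∧ θ + ψ ≤ 1 ∧ δ < η := hDmem
  rw [Metric.mem_ball, Prod.dist_eq, Prod.dist_eq, Real.dist_eq, Real.dist_eq, Real.dist_eq,
    max_lt_iff, max_lt_iff] at hball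
  obtain ⟨hbu, hbψ, hbw⟩ : |θ - θh| < r₀ ∧ |ψ - 0| < r₀ ∧ |η - ηh| < r₀ :=
    ⟨hball.1, hball.2.1, hball.2.2⟩
  rw [sub_zero] at hbψ
  obtain ⟨v, hvdef⟩ : ∃ x : ℝ, x = |θ - θh| := ⟨_, rfl⟩
  obtain ⟨wa, hwadef⟩ : ∃ x : ℝ, x = |η - ηh| := ⟨_, rfl⟩
  have hv0 : 0 ≤ v := hvdef ▸ abs_nonneg _
  have hwa0 : 0 ≤ wa := hwadef ▸ abs_nonneg _
  have hv1 : θ - θh ≤ v := hvdef ▸ le_abs_self _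
  have hv2 : -(θ - θh) ≤ v := hvdef ▸ neg_le_abs _
  have hw1 : η - ηh ≤ wa := hwadef ▸ le_abs_self _
  have hw2 : -(η - ηh) ≤ wa := hwadef ▸ neg_le_abs _
  have hvr : v ≤ r₀ := hvdef ▸ hbu.le
  have hwar : wa ≤ r₀ := hwadef ▸ hbw.le
  have hψr : ψ ≤ r₀ := by linarith only [(abs_lt.mp hbψ).2]
  have hu1 : -r₀ ≤ θ - θh := by linarith only [(abs_lt.mp hbu).1]
  have hu2 : θ - θh ≤ r₀ := by linarith only [(abs_lt.mp hbu).2]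
  have hφ0 : (0:ℝ) ≤ 1 - θ - ψ := by linarith only [hsum]
  have hφ1 : 1 - θ - ψ ≤ 1 := by linarith only [hθ0, hψ0]
  have hθ1 : θ ≤ 1 := by linarith only [hsum, hψ0]
  have hθlb : θh/2 ≤ θ := by linarith only [hu1, hr₀θ]
  have hηpos : 0 < η := lt_trans hδ hηδ
  have hη2 : η ≤ 2 := by linarith only [hw1, hwar, hr₀1, hηh1]
  constructor
  · -- V > 0
    show 0 < A * ((θ - θh)*(θ - θh)) + B * ψ + (η - ηh)*(η - ηh)
    have hA1 : 0 ≤ A * ((θ-θh)*(θ-θh)) := mul_nonneg hA.le (mul_self_nonneg _)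
    have hB1 : 0 ≤ B * ψ := mul_nonneg hB.le hψ0
    have hw3 : 0 ≤ (η-ηh)*(η-ηh) := mul_self_nonneg _
    have hne' : θ ≠ θh ∨ ψ ≠ 0 ∨ η ≠ ηh := by
      by_contra h
      push_neg at h
      exact hne (by simp [h.1, h.2.1, h.2.2])
    rcases hne' with h | h | h
    · have h1 : 0 < (θ-θh)*(θ-θh) :=
        lt_of_le_of_ne (mul_self_nonneg _) (Ne.symm (mul_self_ne_zero.mpr (sub_ne_zero_of_ne h)))
      linarith only [mul_pos hA h1, hB1, hw3]
    · have h1 : 0 < ψ := lt_of_le_of_ne hψ0 (Ne.symm h)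
      linarith only [hA1, mul_pos hB h1, hw3]
    · have h1 : 0 < (η-ηh)*(η-ηh) :=
        lt_of_le_of_ne (mul_self_nonneg _) (Ne.symm (mul_self_ne_zero.mpr (sub_ne_zero_of_ne h)))
      linarith only [hA1, hB1, h1]
  -- derivative bound
  rw [fderiv_quad_apply]
  simp only [epiVF]
  obtain ⟨R, hRdef⟩ : ∃ x : ℝ, x = varrho lam r b ν d θ ψ := ⟨_, rfl⟩
  rw [← hRdef]
  have hRlb : b ≤ R := by
    rw [hRdef, varrho]
    linarith only [hd, mul_nonneg (mul_nonneg hlam.le hθ0) hφ0, mul_nonneg hν.le hφ0,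
      mul_nonneg hr.le hθ0]
  have hθφ1 : θ*(1-θ-ψ) ≤ 1 := by
    linarith only [mul_nonneg hθ0 (by linarith only [hθ0, hψ0] : (0:ℝ) ≤ θ + ψ), hθ1]
  have hRub : R ≤ M := by
    rw [hRdef, varrho, hMdef]
    linarith only [mul_le_mul_of_nonneg_left hθφ1 hlam.le,
      mul_le_mul_of_nonneg_left hφ1 hν.le, mul_le_mul_of_nonneg_left hθ1 hr.le]
  have hRpos : 0 < R := lt_of_lt_of_le hb hRlb
  obtain ⟨s, hsdef⟩ : ∃ x : ℝ, x = 1/(η*R) := ⟨_, rfl⟩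
  have hs : 0 < s := by rw [hsdef]; exact one_div_pos.mpr (mul_pos hηpos hRpos)
  have hηR2M : η*R ≤ 2*M := by
    linarith only [mul_nonneg (by linarith only [hη2] : (0:ℝ) ≤ 2 - η) hRpos.le, hRub]
  have h2Ms : 1 ≤ 2*M*s := by
    rw [hsdef, mul_one_div, le_div_iff₀ (mul_pos hηpos hRpos)]
    linarith only [hηR2M]
  have hsc : s ≤ c := by
    rw [hsdef, hcdef]
    apply one_div_le_one_div_of_le (mul_pos hδ hb)
    linarith only [mul_le_mul_of_nonneg_left hRlb hδ.le,
      mul_le_mul_of_nonneg_right hηδ.le hRpos.le]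
  -- T1
  have hcoef : 2*K₁^2+1 ≤ 2*A*lam*θ*s := by
    have hAs : A*(lam*θh)*s = (2*K₁^2+1)*(2*M)*s := by rw [hAeq]
    linarith only [mul_nonneg (mul_nonneg (mul_nonneg
        (by linarith only [hA] : (0:ℝ) ≤ 2*A) hlam.le) hs.le) (sub_nonneg.mpr hθlb),
      mul_nonneg (by nlinarith only [sq_nonneg K₁] : (0:ℝ) ≤ 2*K₁^2+1) (sub_nonneg.mpr h2Ms),
      hAs]
  have hT1 : 2*A*(θ-θh)*(θ / (η * R) * ((1 - θ - ψ) * lam - r - b))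
      ≤ -(2*K₁^2+1)*(θ-θh)^2 + 2*A*lam*c*r₀*ψ := by
    have e1 : 2*A*(θ-θh)*(θ / (η * R) * ((1 - θ - ψ) * lam - r - b))
        = -(2*A*lam*θ*s)*(θ-θh)^2 + (2*A*lam*ψ)*((θ*s)*(-(θ-θh))) := by
      rw [hsdef]
      linear_combination (2*A*(θ-θh)*(θ/(η*R))) * hlamθh
    rw [e1]
    have hθs0 : 0 ≤ θ*s := mul_nonneg hθ0 hs.le
    have hθs : θ*s ≤ c := by
      linarith only [mul_le_mul_of_nonneg_right hθ1 hs.le, hsc]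
    have hx : (θ*s)*(-(θ-θh)) ≤ c*r₀ := by
      linarith only [mul_nonneg hθs0 (by linarith only [hu1] : 0 ≤ r₀ - (-(θ-θh))),
        mul_nonneg (sub_nonneg.mpr hθs) hr₀pos.le]
    have h2 : (2*A*lam*ψ)*((θ*s)*(-(θ-θh))) ≤ 2*A*lam*c*r₀*ψ := by
      have hcψ : 0 ≤ 2*A*lam*ψ :=
        mul_nonneg (mul_nonneg (by linarith only [hA]) hlam.le) hψ0
      linarith only [mul_le_mul_of_nonneg_left hx hcψ]
    linarith only [mul_nonneg (sub_nonneg.mpr hcoef) (sq_nonneg (θ-θh)), h2]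
  -- T2
  have hT2 : B*(1 / (η * R) * (min (βh * θ * ψ) 1 * (1 - θ - ψ) * ν - b * ψ))
      ≤ -X₂*ψ := by
    have hmin : min (βh*θ*ψ) 1 ≤ βh*θ*ψ := min_le_left _ _
    have hφν : 0 ≤ (1-θ-ψ)*ν := mul_nonneg hφ0 hν.le
    have hq1 : min (βh*θ*ψ) 1 * (1-θ-ψ) * ν ≤ βh*θ*ψ*(1-θ-ψ)*ν := by
      linarith only [mul_le_mul_of_nonneg_right hmin hφν]
    have hθφ : θ*(1-θ-ψ) ≤ θh*(1-θh) + 3*r₀ := by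
      linarith only [mul_nonneg hψ0 hθ0, sq_nonneg (θ-θh),
        mul_nonneg (sub_nonneg.mpr hu2) (by linarith only [hθh1] : (0:ℝ) ≤ 1-θh),
        mul_nonneg (by linarith only [hu1] : (0:ℝ) ≤ (θ-θh)+r₀) hθh0.le, hr₀pos]
    have hkey2 : βh*θ*(1-θ-ψ)*ν ≤ b - ε₀/2 := by
      have h4 := mul_le_mul_of_nonneg_left hθφ (mul_nonneg hβ hν.le)
      rw [hε₀def] at h3βν ⊢
      linarith only [h3βν, h4]
    have h5 : min (βh*θ*ψ) 1 * (1-θ-ψ) * ν - b*ψ ≤ -(ε₀/2)*ψ := by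
      linarith only [hq1, mul_le_mul_of_nonneg_right hkey2 hψ0]
    have h6 : B*(s*(min (βh*θ*ψ) 1 * (1-θ-ψ) * ν - b*ψ)) ≤ B*(s*(-(ε₀/2)*ψ)) := by
      have h6' := mul_le_mul_of_nonneg_left h5 (mul_nonneg hB.le hs.le)
      linarith only [h6']
    have h7 : B*(s*(-(ε₀/2)*ψ)) ≤ -X₂*ψ := by
      have hBeqs : B*ε₀*(s*ψ) = 4*M*X₂*(s*ψ) := by rw [hBeq]
      linarith only [hBeqs, mul_nonneg (sub_nonneg.mpr h2Ms) (mul_nonneg hX₂0.le hψ0)]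
    calc B*(1 / (η * R) * (min (βh * θ * ψ) 1 * (1 - θ - ψ) * ν - b * ψ))
        = B*(s*(min (βh*θ*ψ) 1 * (1-θ-ψ) * ν - b*ψ)) := by rw [hsdef]
      _ ≤ B*(s*(-(ε₀/2)*ψ)) := h6
      _ ≤ -X₂*ψ := h7
  -- T3
  have hT3 : 2*(η-ηh)*((b-d)/R - η)
      ≤ -(3/2)*(η-ηh)^2 + 2*K₁^2*(θ-θh)^2 + 2*K₁*r₀*ψ := by
    obtain ⟨t, htdef⟩ : ∃ x : ℝ, x = 1/(R*R0) := ⟨_, rfl⟩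
    have ht : 0 < t := by rw [htdef]; exact one_div_pos.mpr (mul_pos hRpos hR0pos)
    have hb2t : b^2*t ≤ 1 := by
      rw [htdef, mul_one_div, div_le_one (mul_pos hRpos hR0pos)]
      linarith only [mul_nonneg (sub_nonneg.mpr hRlb) (sub_nonneg.mpr hR0lb),
        mul_le_mul_of_nonneg_left hR0lb hb.le, mul_le_mul_of_nonneg_left hRlb hb.le]
    have hwdec : (b-d)/R - η = -(η-ηh) + (b-d)*(R0-R)*t := by
      rw [htdef, hηdef, ← hR0def]
      field_simp
      ring
    have hid : R - R0 = lam*(θ*(1-θ-ψ) - θh*(1-θh)) + ν*((1-θ-ψ)-(1-θh)) + r*(θ-θh) := by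
      rw [hRdef, hR0def, varrho, varrho]; ring
    have hvψ0 : (0:ℝ) ≤ v + ψ := add_nonneg hv0 hψ0
    have hd1 : R - R0 ≤ L*(v+ψ) := by
      rw [hid, hLdef]
      linarith only [
        mul_nonneg hlam.le (mul_nonneg (sub_nonneg.mpr hv1) hφ0),
        mul_nonneg hlam.le (mul_nonneg hv0 (sub_nonneg.mpr hφ1)),
        mul_nonneg hlam.le (mul_nonneg hθh0.le
          (by linarith only [hv2, hψ0] : 0 ≤ (v+ψ) + ((θ-θh)+ψ))),
        mul_nonneg hlam.le (mul_nonneg (by linarith only [hθh1] : (0:ℝ) ≤ 1-θh) hvψ0),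
        mul_nonneg hν.le (by linarith only [hv2, hψ0] : 0 ≤ (v+ψ) + ((θ-θh)+ψ)),
        mul_nonneg hr.le (sub_nonneg.mpr hv1),
        mul_nonneg hlam.le hψ0,
        mul_nonneg hν.le hvψ0,
        mul_nonneg hr.le hv0, mul_nonneg hr.le hψ0]
    have hd2 : R0 - R ≤ L*(v+ψ) := by
      rw [show R0 - R = -(R-R0) by ring, hid, hLdef]
      linarith only [
        mul_nonneg hlam.le (mul_nonneg (by linarith only [hv2] : 0 ≤ v + (θ-θh)) hφ0),
        mul_nonneg hlam.le (mul_nonneg hv0 (sub_nonneg.mpr hφ1)),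
        mul_nonneg hlam.le (mul_nonneg hθh0.le
          (by linarith only [hv1] : 0 ≤ (v+ψ) - ((θ-θh)+ψ))),
        mul_nonneg hlam.le (mul_nonneg (by linarith only [hθh1] : (0:ℝ) ≤ 1-θh) hvψ0),
        mul_nonneg hν.le (by linarith only [hv1] : 0 ≤ (v+ψ) - ((θ-θh)+ψ)),
        mul_nonneg hr.le (by linarith only [hv2] : 0 ≤ v + (θ-θh)),
        mul_nonneg hlam.le hψ0,
        mul_nonneg hν.le hvψ0,
        mul_nonneg hr.le hv0, mul_nonneg hr.le hψ0]
    have hwD : (η-ηh)*(R0-R) ≤ wa*(L*(v+ψ)) := by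
      linarith only [
        mul_nonneg (by linarith only [hw1] : 0 ≤ wa - (η-ηh))
          (by linarith only [hd1] : 0 ≤ L*(v+ψ) + (R0-R)),
        mul_nonneg (by linarith only [hw2] : 0 ≤ wa + (η-ηh))
          (by linarith only [hd2] : 0 ≤ L*(v+ψ) - (R0-R))]
    have hcross : 2*(η-ηh)*((b-d)*(R0-R)*t) ≤ 2*K₁*wa*(v+ψ) := by
      have h8 : 2*(b-d)*t*((η-ηh)*(R0-R)) ≤ 2*(b-d)*t*(wa*(L*(v+ψ))) :=
        mul_le_mul_of_nonneg_left hwD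
          (mul_nonneg (by linarith only [hbd] : (0:ℝ) ≤ 2*(b-d)) ht.le)
      have c0 : K₁*b^2*(t*(wa*(v+ψ))) = (b-d)*L*(t*(wa*(v+ψ))) := by rw [hK₁b]
      have c1 : 0 ≤ (1 - b^2*t)*(K₁*(wa*(v+ψ))) :=
        mul_nonneg (by linarith only [hb2t])
          (mul_nonneg hK₁.le (mul_nonneg hwa0 hvψ0))
      linarith only [h8, c0, c1]
    have hquad : 2*K₁*wa*(v+ψ) ≤ (1/2)*wa^2 + 2*K₁^2*v^2 + 2*K₁*r₀*ψ := by
      linarith only [sq_nonneg (wa - 2*K₁*v),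
        mul_nonneg (mul_nonneg hK₁.le hψ0) (sub_nonneg.mpr hwar)]
    have hwa2 : wa^2 = (η-ηh)^2 := by rw [hwadef]; exact sq_abs _
    have hv2' : v^2 = (θ-θh)^2 := by rw [hvdef]; exact sq_abs _
    rw [hwa2, hv2'] at hquad
    rw [hwdec]
    linarith only [hcross, hquad]
  -- combine
  have hfinal : 0 ≤ (2*A*lam*c + 2*K₁)*(1-r₀)*ψ :=
    mul_nonneg (mul_nonneg
      (by linarith only [mul_pos (mul_pos hA hlam) hc, hK₁] : (0:ℝ) ≤ 2*A*lam*c + 2*K₁)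
      (by linarith only [hr₀1])) hψ0
  have hsq1 : (0:ℝ) ≤ (θ-θh)^2 := sq_nonneg _
  have hsq2 : (0:ℝ) ≤ (η-ηh)^2 := sq_nonneg _
  have hne' : θ ≠ θh ∨ ψ ≠ 0 ∨ η ≠ ηh := by
    by_contra h
    push_neg at h
    exact hne (by simp [h.1, h.2.1, h.2.2])
  rw [hX₂def] at hT2
  rcases hne' with h | h | h
  · have h1 : 0 < (θ-θh)^2 := by
      have h2 := sub_ne_zero_of_ne h
      positivity
    linarith only [hT1, hT2, hT3, hfinal, hsq2, h1, hψ0]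
  · have h1 : 0 < ψ := lt_of_le_of_ne hψ0 (Ne.symm h)
    linarith only [hT1, hT2, hT3, hfinal, hsq1, hsq2, h1]
  · have h1 : 0 < (η-ηh)^2 := by
      have h2 := sub_ne_zero_of_ne h
      positivity
    linarith only [hT1, hT2, hT3, hfinal, hsq1, h1, hψ0]
end

section
/- Fix reals λ, r, b, ν > 0, d ≥ 0 with b > d, δ > 0, and let q ≡ 1 (everyone vaccinates at each decision epoch). Set ρ := λ/(r+b) and μ := b/ν, and assume ρ > 1 and μρ > μ + 1. Let θ_E := 1 − 1/ρ − 1/(μρ), ψ_E := 1/(μρ), and η̂ := (b−d)/ϱ(θ_E,ψ_E). If η̂ > δ, then the point P := (θ_E, ψ_E, η̂) is a Lyapunov-stable equilibrium of g. -/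

lemma fderivV (lam r b ν d a e θE ψE c : ℝ) (x y : ℝ × ℝ × ℝ) :
    fderiv ℝ (fun p : ℝ × ℝ × ℝ => a/2*((p.1-θE)*(p.1-θE)) + 1/2*((p.2.1-ψE)*(p.2.1-ψE))
      + e/2*(((b + d + lam * p.1 * (1 - p.1 - p.2.1) + ν * (1 - p.1 - p.2.1) + r * p.1) * p.2.2 - c)
            *((b + d + lam * p.1 * (1 - p.1 - p.2.1) + ν * (1 - p.1 - p.2.1) + r * p.1) * p.2.2 - c))) x y
    = a*(x.1-θE)*y.1 + (x.2.1-ψE)*y.2.1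
      + e*((b + d + lam * x.1 * (1 - x.1 - x.2.1) + ν * (1 - x.1 - x.2.1) + r * x.1) * x.2.2 - c) *
        ( ((lam*(1-x.1-x.2.1) - lam*x.1 - ν + r)*y.1 + (-(lam*x.1)-ν)*y.2.1) * x.2.2
          + (b + d + lam * x.1 * (1 - x.1 - x.2.1) + ν * (1 - x.1 - x.2.1) + r * x.1) * y.2.2 ) := by
  have h1 : HasFDerivAt (fun p : ℝ × ℝ × ℝ => p.1)
      (ContinuousLinearMap.fst ℝ ℝ (ℝ × ℝ)) x := hasFDerivAt_fst
  have h2 : HasFDerivAt (fun p : ℝ × ℝ × ℝ => p.2.1)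
      ((ContinuousLinearMap.fst ℝ ℝ ℝ).comp (ContinuousLinearMap.snd ℝ ℝ (ℝ × ℝ))) x :=
    hasFDerivAt_fst.comp x hasFDerivAt_snd
  have h3 : HasFDerivAt (fun p : ℝ × ℝ × ℝ => p.2.2)
      ((ContinuousLinearMap.snd ℝ ℝ ℝ).comp (ContinuousLinearMap.snd ℝ ℝ (ℝ × ℝ))) x :=
    hasFDerivAt_snd.comp x hasFDerivAt_snd
  have hφ := ((hasFDerivAt_const (1:ℝ) x).sub h1).sub h2
  have hϱ := ((((hasFDerivAt_const (b+d) x).add (((h1.const_mul lam).mul hφ))).add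
      (hφ.const_mul ν)).add (h1.const_mul r))
  have hW := (hϱ.mul h3).sub_const c
  have hV := ((((h1.sub_const θE).mul (h1.sub_const θE)).const_mul (a/2)).add
      (((h2.sub_const ψE).mul (h2.sub_const ψE)).const_mul (1/2))).add
      ((hW.mul hW).const_mul (e/2))
  refine (congrArg (fun L => L y) (HasFDerivAt.fderiv hV)).trans ?_
  simp only [ContinuousLinearMap.add_apply, ContinuousLinearMap.smul_apply,
    ContinuousLinearMap.coe_comp', Function.comp_apply, ContinuousLinearMap.coe_fst',
    ContinuousLinearMap.coe_snd', ContinuousLinearMap.sub_apply, ContinuousLinearMap.zero_apply,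
    smul_eq_mul]
  simp only [Pi.add_apply, Pi.sub_apply, Pi.mul_apply]
  ring


set_option maxHeartbeats 2000000 in
/-- Response `q ≡ 1` (everyone vaccinates at each decision epoch),
endemic disease `ρ > 1` with `μρ > μ + 1`: the interior point
`(θ_E, ψ_E, η̂) = (1 − 1/ρ − 1/(μρ), 1/(μρ), η̂)` is a Lyapunov-stable equilibrium of `g`. -/
theorem stmt_13 (lam r b ν d δ ρ μ θE ψE ηh : ℝ)
    (hlam : 0 < lam) (hr : 0 < r) (hb : 0 < b) (hν : 0 < ν)
    (hd : 0 ≤ d) (hbd : d < b) (hδ : 0 < δ)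
    (hρdef : ρ = lam / (r + b)) (hμdef : μ = b / ν)
    (hρ : 1 < ρ) (hμρ : μ + 1 < μ * ρ)
    (hθ : θE = 1 - 1 / ρ - 1 / (μ * ρ)) (hψ : ψE = 1 / (μ * ρ))
    (hηdef : ηh = (b - d) / varrho lam r b ν d θE ψE) (hη : δ < ηh) :
    IsLyapunovStableEquilibrium
      (epiVF lam r b ν d (fun _ _ => 1)) (domD δ) (θE, ψE, ηh) := by
  have hrb : 0 < r + b := by linarith
  have hρ0 : 0 < ρ := by linarith
  have hμ0 : 0 < μ := by rw [hμdef]; positivity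
  have hμρ0 : 0 < μ * ρ := by positivity
  have hψE : 0 < ψE := by rw [hψ]; positivity
  have hφE : 1 - θE - ψE = 1 / ρ := by rw [hθ, hψ]; ring
  have hθE : 0 < θE := by
    have h1 : 1/ρ + 1/(μ*ρ) = (μ+1)/(μ*ρ) := by field_simp
    have h2 : (μ+1)/(μ*ρ) < 1 := (div_lt_one hμρ0).2 hμρ
    rw [hθ]; linarith
  have hsumE : θE + ψE < 1 := by
    have : 0 < 1/ρ := by positivity
    linarith [hφE]
  have hE1 : lam * (1 - θE - ψE) = r + b := by
    rw [hφE, hρdef]; field_simp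
  have hE2 : ν * (1 - θE - ψE) = b * ψE := by
    rw [hφE, hψ, hμdef]; field_simp
  have hϱE : b ≤ varrho lam r b ν d θE ψE := by
    unfold varrho; nlinarith [mul_nonneg (mul_nonneg hlam.le hθE.le) (by linarith : (0:ℝ) ≤ 1 - θE - ψE)]
  have hϱE0 : 0 < varrho lam r b ν d θE ψE := lt_of_lt_of_le hb hϱE
  have hηh : 0 < ηh := lt_trans hδ hη
  have hwE : varrho lam r b ν d θE ψE * ηh = b - d := by
    rw [hηdef, mul_div_cancel₀ _ (ne_of_gt hϱE0)]
  -- constants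
  obtain ⟨K3, hK3def⟩ : ∃ z : ℝ, z = ν / θE := ⟨_, rfl⟩
  have hK3 : 0 < K3 := by rw [hK3def]; positivity
  have hE4 : K3 * θE = ν := by rw [hK3def]; field_simp
  obtain ⟨a, hadef⟩ : ∃ z : ℝ, z = ν / (lam * θE) := ⟨_, rfl⟩
  have ha : 0 < a := by rw [hadef]; positivity
  have hE3 : a * (lam * θE) = ν := by rw [hadef]; field_simp
  have hE5 : K3 = a * lam := by
    rw [hK3def, hadef]
    field_simp
  obtain ⟨CA, hCAdef⟩ : ∃ z : ℝ, z = lam*(lam+ν+r) + (lam+ν)*(ν+b) := ⟨_, rfl⟩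
  have hCA : 0 < CA := by rw [hCAdef]; positivity
  obtain ⟨X, hXdef⟩ : ∃ z : ℝ, z = CA^2*(ηh+1)^2 := ⟨_, rfl⟩
  have hX : 0 < X := by rw [hXdef]; positivity
  obtain ⟨m, hmdef⟩ : ∃ z : ℝ, z = min ν b := ⟨_, rfl⟩
  have hm : 0 < m := by rw [hmdef]; exact lt_min hν hb
  have hmν : m ≤ ν := by rw [hmdef]; exact min_le_left _ _
  have hmb : m ≤ b := by rw [hmdef]; exact min_le_right _ _
  obtain ⟨t, htdef⟩ : ∃ z : ℝ, z = m / (16*(X+1)) := ⟨_, rfl⟩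
  have ht : 0 < t := by rw [htdef]; positivity
  have htX : t * X ≤ m / 16 := by
    rw [htdef, div_mul_eq_mul_div, div_le_div_iff₀ (by positivity) (by norm_num)]
    clear * - hm hX
    nlinarith
  obtain ⟨ε, hεdef⟩ : ∃ z : ℝ, z = t * (2*δ*b) := ⟨_, rfl⟩
  have hε : 0 < ε := by rw [hεdef]; positivity
  obtain ⟨K, hKdef⟩ : ∃ z : ℝ, z = 4*ν/θE := ⟨_, rfl⟩
  have hK : 0 < K := by rw [hKdef]; positivity
  obtain ⟨r₀, hr₀def⟩ : ∃ z : ℝ, z = min 1 (m/(4*(K+1))) := ⟨_, rfl⟩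
  have hr₀ : 0 < r₀ := by rw [hr₀def]; exact lt_min one_pos (by positivity)
  have hr₀1 : r₀ ≤ 1 := by rw [hr₀def]; exact min_le_left _ _
  have hKr : K * r₀ ≤ m / 4 := by
    have h1 : r₀ ≤ m/(4*(K+1)) := by rw [hr₀def]; exact min_le_right _ _
    have h2 : K * r₀ ≤ K * (m/(4*(K+1))) := mul_le_mul_of_nonneg_left h1 hK.le
    have h3 : K * (m/(4*(K+1))) ≤ m/4 := by
      have he : K * (m/(4*(K+1))) = (K*m)/(4*(K+1)) := by ring
      rw [he, div_le_div_iff₀ (by positivity) (by norm_num)]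
      clear * - hm hK
      nlinarith
    linarith
  -- membership and equilibrium
  have hPD : (θE, ψE, ηh) ∈ domD δ := ⟨hθE.le, hψE.le, hsumE.le, hη⟩
  have hg : epiVF lam r b ν d (fun _ _ => 1) (θE, ψE, ηh) = 0 := by
    have hz1 : (1 - θE - ψE) * lam - r - b = 0 := by linear_combination hE1
    have hz2 : (1:ℝ) * (1 - θE - ψE) * ν - b * ψE = 0 := by linear_combination hE2
    simp only [epiVF, Prod.mk_eq_zero]
    refine ⟨?_, ?_, ?_⟩
    · show θE / (ηh * varrho lam r b ν d θE ψE) * ((1 - θE - ψE) * lam - r - b) = 0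
      rw [hz1, mul_zero]
    · show 1 / (ηh * varrho lam r b ν d θE ψE) * ((1:ℝ) * (1 - θE - ψE) * ν - b * ψE) = 0
      rw [hz2, mul_zero]
    · show (b - d) / varrho lam r b ν d θE ψE - ηh = 0
      rw [hηdef, sub_self]
  refine ⟨hPD, hg, r₀, hr₀, fun p : ℝ × ℝ × ℝ =>
      a/2*((p.1-θE)*(p.1-θE)) + 1/2*((p.2.1-ψE)*(p.2.1-ψE))
      + ε/2*(((b + d + lam * p.1 * (1 - p.1 - p.2.1) + ν * (1 - p.1 - p.2.1) + r * p.1) * p.2.2 - (b-d))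
            *((b + d + lam * p.1 * (1 - p.1 - p.2.1) + ν * (1 - p.1 - p.2.1) + r * p.1) * p.2.2 - (b-d))),
    ?_, ?_, ?_⟩
  · -- ContDiff
    fun_prop
  · -- V P = 0
    have hW0 : (b + d + lam * θE * (1 - θE - ψE) + ν * (1 - θE - ψE) + r * θE) * ηh - (b - d) = 0 := by
      have := hwE; unfold varrho at this; linarith
    show a/2*((θE-θE)*(θE-θE)) + 1/2*((ψE-ψE)*(ψE-ψE))
      + ε/2*(((b + d + lam * θE * (1 - θE - ψE) + ν * (1 - θE - ψE) + r * θE) * ηh - (b-d))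
            *((b + d + lam * θE * (1 - θE - ψE) + ν * (1 - θE - ψE) + r * θE) * ηh - (b-d))) = 0
    rw [hW0]; ring
  · rintro ⟨θ, ψ, η⟩ ⟨hxD, hxB⟩ hxP
    obtain ⟨hθ0, hψ0, hsum1, hηδ⟩ := hxD
    simp only at hθ0 hψ0 hsum1 hηδ
    have hθ1 : θ ≤ 1 := by linarith
    have hφ0 : 0 ≤ 1 - θ - ψ := by linarith
    have hφ1 : 1 - θ - ψ ≤ 1 := by linarith
    have hdist := Metric.mem_ball.1 hxB
    have hD3 : max (dist θ θE) (max (dist ψ ψE) (dist η ηh)) < r₀ := by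
      have he : dist ((θ,ψ,η) : ℝ×ℝ×ℝ) ((θE,ψE,ηh) : ℝ×ℝ×ℝ)
          = max (dist θ θE) (max (dist ψ ψE) (dist η ηh)) := by
        rw [Prod.dist_eq, Prod.dist_eq]
      rw [← he]; exact hdist
    have hd1 : |θ - θE| < r₀ := by
      rw [← Real.dist_eq]; exact lt_of_le_of_lt (le_max_left _ _) hD3
    have hd2 : |ψ - ψE| < r₀ := by
      rw [← Real.dist_eq]
      exact lt_of_le_of_lt ((le_max_left _ _).trans (le_max_right _ _)) hD3
    have hd3 : |η - ηh| < r₀ := by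
      rw [← Real.dist_eq]
      exact lt_of_le_of_lt ((le_max_right _ _).trans (le_max_right _ _)) hD3
    obtain ⟨hu1, hu2⟩ := abs_lt.1 hd1
    obtain ⟨hv1, hv2⟩ := abs_lt.1 hd2
    obtain ⟨hw1, hw2⟩ := abs_lt.1 hd3
    obtain ⟨u, hudef⟩ : ∃ z : ℝ, z = θ - θE := ⟨_, rfl⟩
    obtain ⟨v, hvdef⟩ : ∃ z : ℝ, z = ψ - ψE := ⟨_, rfl⟩
    obtain ⟨s, hsdef⟩ : ∃ z : ℝ, z = u + v := ⟨_, rfl⟩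
    obtain ⟨ϱx, hϱxdef⟩ : ∃ z : ℝ, z = b + d + lam * θ * (1 - θ - ψ) + ν * (1 - θ - ψ) + r * θ :=
      ⟨_, rfl⟩
    have hϱxb : b ≤ ϱx := by
      rw [hϱxdef]
      linarith [mul_nonneg (mul_nonneg hlam.le hθ0) hφ0, mul_nonneg hν.le hφ0,
        mul_nonneg hr.le hθ0]
    have hϱx0 : 0 < ϱx := lt_of_lt_of_le hb hϱxb
    have hη0 : 0 < η := lt_trans hδ hηδ
    have hη1 : η ≤ ηh + 1 := by linarith
    obtain ⟨w, hwdef⟩ : ∃ z : ℝ, z = ϱx * η - (b - d) := ⟨_, rfl⟩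
    have hηϱ0 : 0 < η * ϱx := mul_pos hη0 hϱx0
    -- nondegeneracy
    have hne : u ≠ 0 ∨ v ≠ 0 ∨ η ≠ ηh := by
      by_contra h
      push_neg at h
      apply hxP
      have h1 : θ = θE := by have := h.1; rw [hudef] at this; linarith [sub_eq_zero.1 this]
      have h2 : ψ = ψE := by have := h.2.1; rw [hvdef] at this; linarith [sub_eq_zero.1 this]
      rw [h1, h2, h.2.2]
    have hwne : u = 0 → v = 0 → w ≠ 0 := by
      intro h1 h2
      have hθeq : θ = θE := by rw [hudef] at h1; linarith [sub_eq_zero.1 h1]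
      have hψeq : ψ = ψE := by rw [hvdef] at h2; linarith [sub_eq_zero.1 h2]
      have hηne : η ≠ ηh := by
        rcases hne with h | h | h
        · exact absurd h1 h
        · exact absurd h2 h
        · exact h
      have hϱeq : ϱx = varrho lam r b ν d θE ψE := by
        rw [hϱxdef, hθeq, hψeq]; unfold varrho; ring
      rw [hwdef, hϱeq]
      intro hcon
      apply hηne
      have h3 : varrho lam r b ν d θE ψE * η = varrho lam r b ν d θE ψE * ηh := by
        rw [hwE]; linarith
      exact mul_left_cancel₀ (ne_of_gt hϱE0) h3
    constructor
    · -- V > 0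
      show 0 < a/2*((θ-θE)*(θ-θE)) + 1/2*((ψ-ψE)*(ψ-ψE))
        + ε/2*(((b + d + lam * θ * (1 - θ - ψ) + ν * (1 - θ - ψ) + r * θ) * η - (b-d))
              *((b + d + lam * θ * (1 - θ - ψ) + ν * (1 - θ - ψ) + r * θ) * η - (b-d)))
      have hVeq : a/2*((θ-θE)*(θ-θE)) + 1/2*((ψ-ψE)*(ψ-ψE))
          + ε/2*(((b + d + lam * θ * (1 - θ - ψ) + ν * (1 - θ - ψ) + r * θ) * η - (b-d))
                *((b + d + lam * θ * (1 - θ - ψ) + ν * (1 - θ - ψ) + r * θ) * η - (b-d)))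
          = a/2*(u*u) + 1/2*(v*v) + ε/2*(w*w) := by
        rw [hudef, hvdef, hwdef, hϱxdef]
      rw [hVeq]
      rcases eq_or_ne u 0 with hu0 | hu0
      · rcases eq_or_ne v 0 with hv0 | hv0
        · have hw0 : 0 < w*w := mul_self_pos.2 (hwne hu0 hv0)
          clear * - ha hε hw0
          nlinarith [mul_self_nonneg u, mul_self_nonneg v]
        · have hv0' : 0 < v*v := mul_self_pos.2 hv0
          clear * - ha hε hv0'
          nlinarith [mul_self_nonneg u, mul_self_nonneg w]
      · have hu0' : 0 < u*u := mul_self_pos.2 hu0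
        clear * - ha hε hu0'
        nlinarith [mul_self_nonneg v, mul_self_nonneg w]
    · -- derivative negative
      obtain ⟨Q, hQdef⟩ : ∃ z : ℝ, z =
          a*(θ-θE)*(θ*((1-θ-ψ)*lam-r-b)) + (ψ-ψE)*(1*(1-θ-ψ)*ν-b*ψ)
          + ε*((b+d+lam*θ*(1-θ-ψ)+ν*(1-θ-ψ)+r*θ)*η-(b-d)) *
            ( η*((lam*(1-θ-ψ)-lam*θ-ν+r)*(θ*((1-θ-ψ)*lam-r-b))
                + (-(lam*θ)-ν)*(1*(1-θ-ψ)*ν-b*ψ))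
              - η*(b+d+lam*θ*(1-θ-ψ)+ν*(1-θ-ψ)+r*θ)
                *((b+d+lam*θ*(1-θ-ψ)+ν*(1-θ-ψ)+r*θ)*η-(b-d)) ) := ⟨_, rfl⟩
      have hϱne : (b+d+lam*θ*(1-θ-ψ)+ν*(1-θ-ψ)+r*θ) ≠ 0 := by
        rw [← hϱxdef]; exact ne_of_gt hϱx0
      have hηne0 : η ≠ 0 := ne_of_gt hη0
      have hηϱ0' : 0 < η * (b+d+lam*θ*(1-θ-ψ)+ν*(1-θ-ψ)+r*θ) := by
        rw [← hϱxdef]; exact hηϱ0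
      have hF : fderiv ℝ (fun p : ℝ × ℝ × ℝ =>
            a/2*((p.1-θE)*(p.1-θE)) + 1/2*((p.2.1-ψE)*(p.2.1-ψE))
            + ε/2*(((b + d + lam * p.1 * (1 - p.1 - p.2.1) + ν * (1 - p.1 - p.2.1) + r * p.1) * p.2.2 - (b-d))
                  *((b + d + lam * p.1 * (1 - p.1 - p.2.1) + ν * (1 - p.1 - p.2.1) + r * p.1) * p.2.2 - (b-d))))
            (θ,ψ,η) (epiVF lam r b ν d (fun _ _ => 1) (θ,ψ,η))
          = Q / (η * (b+d+lam*θ*(1-θ-ψ)+ν*(1-θ-ψ)+r*θ)) := by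
        rw [fderivV, hQdef]
        simp only [epiVF, varrho]
        rw [eq_div_iff (ne_of_gt hηϱ0')]
        field_simp [hηne0, hϱne]
        ring
      rw [hF]
      apply div_neg_of_neg_of_pos _ hηϱ0'
      -- the algebraic identity
      obtain ⟨Ac, hAcdef⟩ : ∃ z : ℝ, z =
          lam*θ*(lam*(1-θ-ψ)-lam*θ-ν+r)*s + (-(lam*θ)-ν)*(ν*u+(ν+b)*v) := ⟨_, rfl⟩
      have hQid : Q = -(ν*s^2) - b*v^2 - K3*(u^2*s) - ε*(w*(η*Ac)) - ε*(η*(ϱx*w^2)) := by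
        rw [hQdef, hAcdef, hsdef, hudef, hvdef, hwdef, hϱxdef]
        linear_combination (a*(θ-θE)*θ
            + ε*((b+d+lam*θ*(1-θ-ψ)+ν*(1-θ-ψ)+r*θ)*η-(b-d))*η*(lam*(1-θ-ψ)-lam*θ-ν+r)*θ)*hE1
          + ((ψ-ψE) + ε*((b+d+lam*θ*(1-θ-ψ)+ν*(1-θ-ψ)+r*θ)*η-(b-d))*η*(-(lam*θ)-ν))*hE2
          - ((θ-θE)*((θ-θE)+(ψ-ψE)))*hE3
          + ((θ-θE)^2*((θ-θE)+(ψ-ψE)))*hE5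
      -- bounds
      have hs2r : -s ≤ 2*r₀ := by rw [hsdef, hudef, hvdef]; linarith
      have hu2b : u^2 ≤ 2*s^2 + 2*v^2 := by
        have h0 : u^2 ≤ 2*(u+v)^2 + 2*v^2 := by clear * -; nlinarith [sq_nonneg (u+2*v)]
        rw [← hsdef] at h0; exact h0
      have hcube : -(K3*(u^2*s)) ≤ m/4*(s^2+v^2) := by
        have e1 : u^2*(-s) ≤ u^2*(2*r₀) := mul_le_mul_of_nonneg_left hs2r (sq_nonneg u)
        have e2 : u^2*(2*r₀) ≤ (2*s^2+2*v^2)*(2*r₀) :=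
          mul_le_mul_of_nonneg_right hu2b (by linarith)
        have e3 : K3*(u^2*(-s)) ≤ K3*((2*s^2+2*v^2)*(2*r₀)) :=
          mul_le_mul_of_nonneg_left (e1.trans e2) hK3.le
        have e4 : (4*K3)*r₀*(s^2+v^2) ≤ m/4*(s^2+v^2) := by
          have hK4 : K = 4*K3 := by rw [hKdef, hK3def]; ring
          rw [← hK4]
          exact mul_le_mul_of_nonneg_right hKr (by positivity)
        clear * - e3 e4
        nlinarith
      -- |Ac| bound
      have habs1 : |lam*θ*(lam*(1-θ-ψ)-lam*θ-ν+r)*s| ≤ lam*(lam+ν+r)*|s| := by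
        rw [abs_mul]
        refine mul_le_mul_of_nonneg_right ?_ (abs_nonneg s)
        rw [abs_mul]
        have h1 : |lam*θ| ≤ lam := by
          rw [abs_of_nonneg (by positivity)]
          clear * - hlam hθ1 hθ0
          nlinarith
        have h2 : |lam*(1-θ-ψ)-lam*θ-ν+r| ≤ lam+ν+r := by
          rw [abs_le]
          clear * - hlam hν hr hφ0 hφ1 hθ0 hθ1
          constructor
          · nlinarith [mul_nonneg hlam.le hφ0, mul_le_of_le_one_right hlam.le hθ1]
          · nlinarith [mul_nonneg hlam.le hθ0, mul_le_of_le_one_right hlam.le hφ1]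
        exact mul_le_mul h1 h2 (abs_nonneg _) hlam.le
      have habs2 : |(-(lam*θ)-ν)*(ν*u+(ν+b)*v)| ≤ (lam+ν)*((ν+b)*(|s|+2*|v|)) := by
        rw [abs_mul]
        have hpψ : |(-(lam*θ)-ν)| ≤ lam+ν := by
          rw [abs_le]
          clear * - hlam hν hθ0 hθ1
          constructor
          · nlinarith [mul_le_of_le_one_right hlam.le hθ1]
          · nlinarith [mul_nonneg hlam.le hθ0]
        have huvb : |ν*u+(ν+b)*v| ≤ (ν+b)*(|s|+2*|v|) := by
          have h1 : |ν*u+(ν+b)*v| ≤ ν*|u| + (ν+b)*|v| := by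
            refine (abs_add_le _ _).trans ?_
            rw [abs_mul, abs_mul, abs_of_nonneg hν.le,
              abs_of_nonneg (by linarith : (0:ℝ) ≤ ν+b)]
          have h2 : |u| ≤ |s| + |v| := by
            have h3 : u = s - v := by rw [hsdef]; ring
            rw [h3]
            exact abs_sub _ _
          clear * - h1 h2 hν hb
          nlinarith [abs_nonneg u, abs_nonneg v, abs_nonneg s]
        exact mul_le_mul hpψ huvb (abs_nonneg _) (by positivity)
      have hAcb : |Ac| ≤ CA*(|s|+2*|v|) := by
        rw [hAcdef, hCAdef]
        have h0 := abs_add_le (lam*θ*(lam*(1-θ-ψ)-lam*θ-ν+r)*s) ((-(lam*θ)-ν)*(ν*u+(ν+b)*v))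
        have hfin : lam*(lam+ν+r)*|s| + (lam+ν)*((ν+b)*(|s|+2*|v|))
            ≤ (lam*(lam+ν+r) + (lam+ν)*(ν+b))*(|s|+2*|v|) := by
          clear * - hlam hν hr hb
          nlinarith [abs_nonneg s, abs_nonneg v,
            mul_nonneg (mul_nonneg hlam.le (by linarith : (0:ℝ) ≤ lam+ν+r)) (abs_nonneg v)]
        calc |lam*θ*(lam*(1-θ-ψ)-lam*θ-ν+r)*s + (-(lam*θ)-ν)*(ν*u+(ν+b)*v)|
            ≤ |lam*θ*(lam*(1-θ-ψ)-lam*θ-ν+r)*s| + |(-(lam*θ)-ν)*(ν*u+(ν+b)*v)| := h0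
          _ ≤ (lam*(lam+ν+r) + (lam+ν)*(ν+b))*(|s|+2*|v|) := by linarith [habs1, habs2]
      have hAc2 : (η*Ac)^2 ≤ X*(2*s^2+8*v^2) := by
        have h1 : Ac^2 ≤ (CA*(|s|+2*|v|))^2 := by
          clear * - hAcb
          nlinarith [sq_abs Ac, abs_nonneg Ac]
        have h2 : η^2 ≤ (ηh+1)^2 := by clear * - hη0 hη1 hηh; nlinarith
        have h3 : (|s|+2*|v|)^2 ≤ 2*s^2+8*v^2 := by
          clear * -
          nlinarith [sq_nonneg (|s|-2*|v|), sq_abs s, sq_abs v, abs_nonneg s, abs_nonneg v]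
        have h4 : (η*Ac)^2 = η^2*Ac^2 := by ring
        rw [h4, hXdef]
        clear * - h1 h2 h3 hCA
        nlinarith [sq_nonneg Ac, sq_nonneg η, sq_nonneg (ηh+1), sq_nonneg CA,
          mul_le_mul h2 h1 (sq_nonneg Ac) (sq_nonneg (ηh+1)),
          mul_le_mul_of_nonneg_left h3 (mul_nonneg (sq_nonneg CA) (sq_nonneg (ηh+1)))]
      have hAM : -(ε*(w*(η*Ac))) ≤ ε*δ*b/2*w^2 + t*(η*Ac)^2 := by
        rw [hεdef]
        clear * - ht hδ hb
        nlinarith [mul_nonneg ht.le (sq_nonneg (δ*b*w + η*Ac))]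
      have htX' : t*(η*Ac)^2 ≤ m/16*(2*s^2+8*v^2) := by
        have e1 : t*(η*Ac)^2 ≤ t*(X*(2*s^2+8*v^2)) := mul_le_mul_of_nonneg_left hAc2 ht.le
        have e2 : (t*X)*(2*s^2+8*v^2) ≤ m/16*(2*s^2+8*v^2) :=
          mul_le_mul_of_nonneg_right htX (by positivity)
        clear * - e1 e2
        nlinarith
      have hδb : δ*b ≤ η*ϱx := mul_le_mul hηδ.le hϱxb hb.le hη0.le
      have hw2' : -(ε*(η*(ϱx*w^2))) ≤ -(ε*δ*b*w^2) := by
        have := mul_le_mul_of_nonneg_right hδb (mul_nonneg hε.le (sq_nonneg w))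
        clear * - this
        nlinarith
      have hQle : Q ≤ -(5*ν/8*s^2) - b/4*v^2 - ε*δ*b/2*w^2 := by
        rw [hQid]
        have m1 : 3*m/8*s^2 ≤ 3*ν/8*s^2 := by clear * - hmν; nlinarith [sq_nonneg s]
        have m2 : 3*m/4*v^2 ≤ 3*b/4*v^2 := by clear * - hmb; nlinarith [sq_nonneg v]
        clear * - hcube hAM htX' hw2' m1 m2
        nlinarith
      have hpos : 0 < 5*ν/8*s^2 + b/4*v^2 + ε*δ*b/2*w^2 := by
        have hεδb : 0 < ε*δ*b/2 := by positivity
        rcases eq_or_ne u 0 with hu0 | hu0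
        · rcases eq_or_ne v 0 with hv0 | hv0
          · have hwp : 0 < w^2 :=
              lt_of_le_of_ne (sq_nonneg w) (Ne.symm (pow_ne_zero 2 (hwne hu0 hv0)))
            clear * - hwp hεδb hν hb
            nlinarith [sq_nonneg s, sq_nonneg v]
          · have hvp : 0 < v^2 := lt_of_le_of_ne (sq_nonneg v) (Ne.symm (pow_ne_zero 2 hv0))
            clear * - hvp hεδb hν hb
            nlinarith [sq_nonneg s, sq_nonneg w]
        · rcases eq_or_ne v 0 with hv0 | hv0
          · have hsne : s ≠ 0 := by rw [hsdef, hv0, add_zero]; exact hu0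
            have hsp : 0 < s^2 := lt_of_le_of_ne (sq_nonneg s) (Ne.symm (pow_ne_zero 2 hsne))
            clear * - hsp hεδb hν hb
            nlinarith [sq_nonneg v, sq_nonneg w]
          · have hvp : 0 < v^2 := lt_of_le_of_ne (sq_nonneg v) (Ne.symm (pow_ne_zero 2 hv0))
            clear * - hvp hεδb hν hb
            nlinarith [sq_nonneg s, sq_nonneg w]
      linarith
end

section
/- Fix reals λ, r, b, ν > 0 and d_e with 0 < d_e < λ. Set ρ_e := (λ − d_e)/(r+b), B := λb + d_e(r + d_e − λ − ν), ψ* := (−B + √(B² + 4 λ d_e ν (r+b)))/(2 λ d_e), and θ* := 1 − 1/ρ_e − λψ*/(λ − d_e). Then, with φ* := 1 − θ* − ψ*, one has φ*·λ − r − d_e − (b − d_e θ*) = 0 and φ*·ν − (b − d_e θ*)·ψ* = 0. -/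
/-- The candidate evolutionary stable equilibrium `(θ*, ψ*)` of the
deadly-disease (`0 < d_e < λ`) model with `q ≡ 1` annihilates the θ- and ψ-components of
the limit ODE: with `ρ_e = (λ−d_e)/(r+b)`, `B = λb + d_e(r + d_e − λ − ν)`,
`ψ* = (−B + √(B² + 4λd_eν(r+b)))/(2λd_e)` and `θ* = 1 − 1/ρ_e − λψ*/(λ−d_e)`, setting
`φ* = 1 − θ* − ψ*` one has `φ*λ − r − d_e − (b − d_eθ*) = 0` and
`φ*ν − (b − d_eθ*)ψ* = 0`. -/
theorem stmt_16 (lam r b ν de ρe B ψs θs : ℝ)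
    (hlam : 0 < lam) (hr : 0 < r) (hb : 0 < b) (hν : 0 < ν)
    (hde : 0 < de) (hdel : de < lam)
    (hρe : ρe = (lam - de) / (r + b))
    (hB : B = lam * b + de * (r + de - lam - ν))
    (hψ : ψs = (-B + Real.sqrt (B ^ 2 + 4 * lam * de * ν * (r + b))) / (2 * lam * de))
    (hθ : θs = 1 - 1 / ρe - lam * ψs / (lam - de)) :
    (1 - θs - ψs) * lam - r - de - (b - de * θs) = 0 ∧
    (1 - θs - ψs) * ν - (b - de * θs) * ψs = 0 := by
  have hld : lam - de ≠ 0 := sub_ne_zero.mpr (ne_of_gt hdel)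
  have hrb : r + b ≠ 0 := by positivity
  have hρne : ρe ≠ 0 := by
    rw [hρe]; positivity
  set S := Real.sqrt (B ^ 2 + 4 * lam * de * ν * (r + b)) with hSdef
  have hS2 : S ^ 2 = B ^ 2 + 4 * lam * de * ν * (r + b) := by
    rw [hSdef]
    exact Real.sq_sqrt (by positivity)
  have hψeq : ψs * (2 * lam * de) = -B + S := by
    rw [hψ]; field_simp
  have h2 : (ψs * (2 * lam * de)) ^ 2 = (-B + S) ^ 2 := by rw [hψeq]
  have hquad4 : (4 * lam * de) * (lam * de * ψs ^ 2 + B * ψs - ν * (r + b)) = 0 := by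
    linear_combination h2 + 2 * B * hψeq + hS2
  have hquad : lam * de * ψs ^ 2 + B * ψs - ν * (r + b) = 0 := by
    rcases mul_eq_zero.mp hquad4 with h | h
    · exact absurd h (by positivity)
    · exact h
  constructor
  · rw [hθ, hρe]
    field_simp
    ring
  · rw [hθ, hρe]
    field_simp
    linear_combination (-1 : ℝ) * hquad + ψs * hB
end
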